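/- Let q = p^r be a prime power with Φ(q) = p^r − p^{r−1} ≥ 2. Then there exists an invertible Φ(q)×Φ(q) matrix M over the finite field F_q such that every (Φ(q)−2)×(Φ(q)−2) submatrix of M (obtained by selecting any Φ(q)−2 rows and any Φ(q)−2 columns) is invertible; that is, a linear (Φ(q)−2, Φ(q), q)-AONT exists over F_q. -/

import Mathlib

open Matrix Finset

/-- From a linearly independent family of functions one can pick evaluation points
making the evaluation matrix invertible. -/
lemma exists_eval_points {K : Type*} [Field K] {n : ℕ} {ι : Type*} [Fintype ι] [DecidableEq ι]
    (v : Fin n → ι → K) (hv : LinearIndependent K v) :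
    ∃ t : Fin n → ι, (Matrix.of fun i j => v i (t j)).det ≠ 0 := by
  classical
  set A : Matrix (Fin n) ι K := Matrix.of fun i x => v i x with hA
  have hrank : A.rank = n := by
    have : LinearIndependent K A := hv
    simpa using this.rank_matrix
  have hspan : Submodule.span K (Set.range Aᵀ) = ⊤ := by
    apply Submodule.eq_top_of_finrank_eq
    change Module.finrank K (Submodule.span K (Set.range A.col)) = _
    rw [← Matrix.rank_eq_finrank_span_cols, hrank]
    simp [Module.finrank_fintype_fun_eq_card]
  obtain ⟨b, hbsub, hbspan, hbli⟩ := exists_linearIndependent K (Set.range Aᵀ)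
  rw [hspan] at hbspan
  have hbfin : b.Finite := by
    have : Finite b := hbli.finite
    exact Set.toFinite b
  haveI : Fintype b := hbfin.fintype
  have hbasis : Module.Basis b K (Fin n → K) := Module.Basis.mk hbli (by rw [Subtype.range_coe, hbspan])
  have hcard : Fintype.card b = n := by
    have := Module.finrank_eq_card_basis hbasis
    simp [Module.finrank_fintype_fun_eq_card] at this
    have h2 : b.ncard = Fintype.card b := by rw [← Nat.card_coe_set_eq, Nat.card_eq_fintype_card]
    omega
  obtain ε := (Fintype.equivFinOfCardEq hcard).symm
  have hchoice : ∀ j : Fin n, ∃ x : ι, Aᵀ x = (ε j : Fin n → K) := by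
    intro j; exact hbsub (ε j).2
  choose t ht using hchoice
  refine ⟨t, ?_⟩
  intro hdet
  obtain ⟨u, hu0, huv⟩ := Matrix.exists_mulVec_eq_zero_iff.mpr hdet
  have hli : LinearIndependent K (Subtype.val ∘ fun j : Fin n => ε j) :=
    hbli.comp (fun j => ε j) (fun a b hab => ε.injective hab)
  have hz : ∀ j, u j = 0 := by
    rw [Fintype.linearIndependent_iff] at hli
    apply hli
    funext i
    have h0 : ∑ x : Fin n, v i (t x) * u x = 0 := by
      have := congrFun huv i
      simpa [Matrix.mulVec, dotProduct] using this
    simp only [Finset.sum_apply, Pi.smul_apply, smul_eq_mul, Pi.zero_apply, Function.comp]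
    rw [← h0]
    apply Finset.sum_congr rfl
    intro j _
    have hj : (ε j : Fin n → K) i = v i (t j) := by rw [← ht j]; rfl
    rw [hj]; ring
  exact hu0 (funext hz)

lemma monomials_linearIndependent {K : Type*} [Field K] [Fintype K] {m : ℕ} (f : Fin m → ℕ)
    (hinj : Function.Injective f) (hlt : ∀ j, f j < Fintype.card K) :
    LinearIndependent K (fun j (x : K) => x ^ f j) := by
  classical
  rw [Fintype.linearIndependent_iff]
  intro g hg j
  set P : Polynomial K := ∑ j : Fin m, Polynomial.C (g j) * Polynomial.X ^ f j with hP
  have heval : ∀ x : K, P.eval x = 0 := by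
    intro x
    have := congrFun hg x
    simpa [P, Polynomial.eval_finset_sum, Finset.sum_apply] using this
  have hdeg : P.natDegree < Fintype.card K := by
    have : P.natDegree ≤ Fintype.card K - 1 := by
      apply Polynomial.natDegree_sum_le_of_forall_le
      intro i _
      apply le_trans (Polynomial.natDegree_C_mul_le _ _)
      rw [Polynomial.natDegree_X_pow]
      have := hlt i; omega
    have hpos : 0 < Fintype.card K := Fintype.card_pos
    omega
  have hP0 : P = 0 :=
    Polynomial.eq_zero_of_natDegree_lt_card_of_eval_eq_zero P Function.injective_id heval hdeg
  have := congrArg (fun Q => Polynomial.coeff Q (f j)) hP0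
  simp only [P, Polynomial.finset_sum_coeff, Polynomial.coeff_C_mul, Polynomial.coeff_X_pow,
    Polynomial.coeff_zero] at this
  rw [Finset.sum_eq_single j] at this
  · simpa using this
  · intro b _ hb
    simp [(hinj.ne hb).symm]
  · simp

lemma charP_of_card {p r : ℕ} (hp : p.Prime) (hr : 0 < r) (F : Type*) [Field F] [Fintype F]
    (hF : Fintype.card F = p ^ r) : CharP F p := by
  haveI := ringChar.charP F
  obtain ⟨n, hcprime, hcard⟩ := FiniteField.card F (ringChar F)
  rw [hF] at hcard
  have hdvd : p ∣ (ringChar F) ^ (n : ℕ) := by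
    rw [← hcard]; exact dvd_pow_self p (by omega)
  have : p = ringChar F :=
    (Nat.prime_dvd_prime_iff_eq hp hcprime).mp (hp.dvd_of_dvd_pow hdvd)
  rw [this]; exact ringChar.charP F

lemma choose_q_sub_one_cast {p r : ℕ} (hp : p.Prime) (hr : 0 < r) (F : Type*) [Field F]
    [CharP F p] (j : ℕ) (hj : j ≤ p ^ r - 1) :
    (((p ^ r - 1).choose j : ℕ) : F) = (-1 : F) ^ j := by
  have hq1 : 1 ≤ p ^ r := Nat.one_le_pow _ _ hp.pos
  induction j with
  | zero => simp
  | succ i ih =>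
    have hi : i ≤ p ^ r - 1 := by omega
    have h1 : p ^ r - 1 + 1 = p ^ r := by omega
    have hpascal : (p ^ r).choose (i + 1) =
        (p ^ r - 1).choose i + (p ^ r - 1).choose (i + 1) := by
      conv_lhs => rw [← h1]
      exact Nat.choose_succ_succ _ i
    have hdvd : p ∣ (p ^ r).choose (i + 1) :=
      Nat.Prime.dvd_choose_pow hp (by omega) (by omega)
    have hcast0 : (((p ^ r).choose (i + 1) : ℕ) : F) = 0 :=
      (CharP.cast_eq_zero_iff F p _).mpr hdvd
    have hc := congrArg (fun n : ℕ => (n : F)) hpascal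
    simp only [Nat.cast_add, hcast0] at hc
    rw [ih hi] at hc
    linear_combination -hc

lemma choose_q_sub_two_cast {p r : ℕ} (hp : p.Prime) (hr : 0 < r) (F : Type*) [Field F]
    [CharP F p] (hq : 2 ≤ p ^ r) (k : ℕ) (hk : k ≤ p ^ r - 2) :
    (((p ^ r - 2).choose k : ℕ) : F) = (-1 : F) ^ k * ((k : F) + 1) := by
  have hid := Nat.add_one_mul_choose_eq (p ^ r - 2) k
  have h1 : p ^ r - 2 + 1 = p ^ r - 1 := by omega
  rw [h1] at hid
  have hc := congrArg (fun n : ℕ => (n : F)) hid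
  simp only [Nat.cast_mul, Nat.cast_succ] at hc
  have hq0 : ((p ^ r : ℕ) : F) = 0 := (CharP.cast_eq_zero_iff F p _).mpr (dvd_pow_self p (by omega))
  have hqm1 : (((p ^ r - 1 : ℕ)) : F) = -1 := by
    rw [Nat.cast_sub (by omega)]; rw [hq0]; simp
  have hcc : (((p ^ r - 1).choose (k + 1) : ℕ) : F) = (-1 : F) ^ (k + 1) :=
    choose_q_sub_one_cast hp hr F (k + 1) (by omega)
  rw [hqm1] at hc
  rw [hcc] at hc
  linear_combination (-1 : F) * hc

/-- any 2×2 "Cauchy-with-holes" minor is nonzero -/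
lemma minor2 {F : Type*} [Field F] {x1 x2 y1 y2 : F} (hx : x1 ≠ x2) (hy : y1 ≠ y2) :
    (x1 + y1)⁻¹ * (x2 + y2)⁻¹ - (x1 + y2)⁻¹ * (x2 + y1)⁻¹ ≠ 0 := by
  rcases eq_or_ne (x1 + y1) 0 with h11 | h11
  · -- first term zero
    have ha : x1 + y2 ≠ 0 := fun h => hy (by linear_combination h11 - h)
    have hb : x2 + y1 ≠ 0 := fun h => hx (by linear_combination h11 - h)
    rw [h11, _root_.inv_zero, zero_mul, zero_sub, neg_ne_zero]
    exact mul_ne_zero (inv_ne_zero ha) (inv_ne_zero hb)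
  rcases eq_or_ne (x2 + y2) 0 with h22 | h22
  · have ha : x1 + y2 ≠ 0 := fun h => hx (by linear_combination h - h22)
    have hb : x2 + y1 ≠ 0 := fun h => hy (by linear_combination h - h22)
    rw [h22, _root_.inv_zero, mul_zero, zero_sub, neg_ne_zero]
    exact mul_ne_zero (inv_ne_zero ha) (inv_ne_zero hb)
  rcases eq_or_ne (x1 + y2) 0 with h12' | h12'
  · rw [h12', _root_.inv_zero, zero_mul, sub_zero]
    exact mul_ne_zero (inv_ne_zero h11) (inv_ne_zero h22)
  rcases eq_or_ne (x2 + y1) 0 with h21 | h21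
  · rw [h21, _root_.inv_zero, mul_zero, sub_zero]
    exact mul_ne_zero (inv_ne_zero h11) (inv_ne_zero h22)
  · -- all nonzero
    have hnum : ((x1 + y1)⁻¹ * (x2 + y2)⁻¹ - (x1 + y2)⁻¹ * (x2 + y1)⁻¹) *
        ((x1 + y1) * (x2 + y2) * (x1 + y2) * (x2 + y1)) = (x1 - x2) * (y1 - y2) := by
      field_simp
      ring
    intro h0
    rw [h0, zero_mul] at hnum
    have := mul_ne_zero (sub_ne_zero.mpr hx) (sub_ne_zero.mpr hy)
    exact this hnum.symm

lemma exists_cauchy_points {p r : ℕ} (hp : p.Prime) (hr : 0 < r)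
    (hΦ : 2 ≤ p ^ r - p ^ (r - 1)) (F : Type*) [Field F] [Fintype F]
    (hF : Fintype.card F = p ^ r) :
    ∃ t1 t2 : Fin (p ^ r - p ^ (r - 1)) → F, Function.Injective t1 ∧ Function.Injective t2 ∧
      (Matrix.of fun i j => (t1 i + t2 j)⁻¹).det ≠ 0 := by
  classical
  haveI : CharP F p := charP_of_card hp hr F hF
  set q := p ^ r with hqdef
  set s := p ^ r - p ^ (r - 1) with hsdef
  have hp2 : 2 ≤ p := hp.two_le
  have hpr1 : 1 ≤ p ^ (r - 1) := Nat.one_le_pow _ _ (by omega)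
  have hqpp : q = p * p ^ (r - 1) := by
    rw [hqdef, ← pow_succ']
    congr 1; omega
  have hple : p ^ (r - 1) ≤ p ^ r := Nat.pow_le_pow_right (by omega) (by omega)
  have hsum : s + p ^ (r - 1) = q := by rw [hsdef, hqdef]; omega
  have hq3 : 3 ≤ q := by omega
  -- the exponent set
  set K : Finset ℕ := (Finset.range (q - 1)).filter (fun k => ¬ p ∣ (k + 1)) with hKdef
  have hKcard : K.card = s := by
    have h1 := Nat.card_multiples (q - 1) p
    have h2 : ((Finset.range (q - 1)).filter (fun k => p ∣ (k + 1))).card + K.card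
        = q - 1 := by
      rw [hKdef]
      rw [Finset.card_filter_add_card_filter_not]
      exact Finset.card_range _
    have h3 : (q - 1) / p = p ^ (r - 1) - 1 := by
      have hpq : p ≤ q := by
        rw [hqpp]; exact Nat.le_mul_of_pos_right p (by omega)
      have he : q - 1 = (p - 1) + (p ^ (r - 1) - 1) * p := by
        have h5 : (p ^ (r - 1) - 1) * p = p * p ^ (r - 1) - p := by
          rw [Nat.sub_mul]; ring_nf
        rw [h5, ← hqpp]
        omega
      rw [he, Nat.add_mul_div_right _ _ (by omega : 0 < p), Nat.div_eq_of_lt (by omega)]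
      omega
    rw [h1, h3] at h2
    omega
  set κ := K.orderIsoOfFin hKcard with hκdef
  set e : Fin s → ℕ := fun j => (κ j : ℕ) with hedef
  have he_mem : ∀ j, e j < q - 1 ∧ ¬ p ∣ e j + 1 := by
    intro j
    have h : (κ j : ℕ) ∈ (Finset.range (q - 1)).filter (fun k => ¬ p ∣ (k + 1)) := (κ j).2
    rw [Finset.mem_filter, Finset.mem_range] at h
    exact h
  have he_inj : Function.Injective e := by
    intro a b hab
    exact κ.injective (Subtype.ext hab)
  set d : Fin s → F := fun j => (-1 : F) ^ (e j) * ((e j : F) + 1) with hddef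
  have hd_ne : ∀ j, d j ≠ 0 := by
    intro j
    apply mul_ne_zero (pow_ne_zero _ (by norm_num))
    have : ((e j : F) + 1) = (((e j + 1 : ℕ)) : F) := by push_cast; ring
    rw [this]
    rw [Ne, CharP.cast_eq_zero_iff F p]
    exact (he_mem j).2
  -- the key identity
  have hkey : ∀ x y : F, (x + y)⁻¹ = ∑ j : Fin s, d j * (x ^ (e j) * y ^ (q - 2 - e j)) := by
    intro x y
    have hinv : ∀ z : F, z⁻¹ = z ^ (q - 2) := by
      intro z
      rcases eq_or_ne z 0 with rfl | hz
      · rw [zero_pow (by omega : q - 2 ≠ 0)]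
        exact inv_zero
      · have h1 : z ^ (q - 2) * z = 1 := by
          rw [← pow_succ]
          have h2 : q - 2 + 1 = q - 1 := by omega
          rw [h2]
          have := FiniteField.pow_card_sub_one_eq_one z hz
          rwa [hF] at this
        exact (inv_eq_of_mul_eq_one_left h1)
    rw [hinv (x + y), add_pow]
    have hrange : q - 2 + 1 = q - 1 := by omega
    rw [hrange]
    have hsub : ∑ m ∈ Finset.range (q - 1), x ^ m * y ^ (q - 2 - m) * ((q - 2).choose m : F)
        = ∑ m ∈ K, x ^ m * y ^ (q - 2 - m) * ((q - 2).choose m : F) := by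
      symm
      apply Finset.sum_subset (Finset.filter_subset _ _)
      intro m hm hmK
      have hdvd : p ∣ m + 1 := by
        by_contra hnd
        exact hmK (Finset.mem_filter.mpr ⟨hm, hnd⟩)
      rw [Finset.mem_range] at hm
      rw [choose_q_sub_two_cast hp hr F (by omega) m (by omega)]
      have : ((m : F) + 1) = (((m + 1 : ℕ)) : F) := by push_cast; ring
      rw [this, (CharP.cast_eq_zero_iff F p _).mpr hdvd]
      ring
    rw [hsub]
    rw [← Finset.sum_coe_sort K]
    rw [← Fintype.sum_equiv κ.toEquiv
      (fun j => x ^ (e j) * y ^ (q - 2 - e j) * ((q - 2).choose (e j) : F))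
      (fun a => x ^ (a : ℕ) * y ^ (q - 2 - (a : ℕ)) * ((q - 2).choose (a : ℕ) : F))
      (fun j => rfl)]
    apply Finset.sum_congr rfl
    intro j _
    rw [choose_q_sub_two_cast hp hr F (by omega) (e j) (by have := (he_mem j).1; omega)]
    rw [hddef]
    ring
  -- evaluation points
  obtain ⟨t1, ht1⟩ := exists_eval_points (fun k (x : F) => x ^ (e k))
    (monomials_linearIndependent e he_inj (by intro j; have := (he_mem j).1; rw [hF]; omega))
  obtain ⟨t2, ht2⟩ := exists_eval_points (fun k (x : F) => x ^ (q - 2 - e k))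
    (monomials_linearIndependent (fun k => q - 2 - e k)
      (by intro a b hab
          have ha := (he_mem a).1; have hb := (he_mem b).1
          have hab' : q - 2 - e a = q - 2 - e b := hab
          apply he_inj; omega)
      (by intro j
          show q - 2 - e j < Fintype.card F
          rw [hF]; have := (he_mem j).1; omega))
  refine ⟨t1, t2, ?_, ?_, ?_⟩
  · -- injectivity of t1
    intro a b hab
    by_contra hne
    apply ht1
    apply Matrix.det_zero_of_column_eq hne
    intro i; simp [hab]
  · intro a b hab
    by_contra hne
    apply ht2
    apply Matrix.det_zero_of_column_eq hne
    intro i; simp [hab]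
  · -- determinant
    have hfact : (Matrix.of fun i j => (t1 i + t2 j)⁻¹) =
        (Matrix.of fun i k => t1 i ^ (e k)) *
          (Matrix.diagonal d * Matrix.of fun k j => t2 j ^ (q - 2 - e k)) := by
      ext i j
      rw [Matrix.mul_apply]
      simp only [Matrix.of_apply, Matrix.diagonal_mul]
      rw [hkey (t1 i) (t2 j)]
      apply Finset.sum_congr rfl
      intro k _
      ring
    rw [hfact, Matrix.det_mul, Matrix.det_mul, Matrix.det_diagonal]
    apply mul_ne_zero
    · have : (Matrix.of fun i k => t1 i ^ (e k)) =
          (Matrix.of fun k j => (fun k (x : F) => x ^ (e k)) k (t1 j))ᵀ := by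
        ext i k; simp
      rw [this, Matrix.det_transpose]
      exact ht1
    · exact mul_ne_zero (Finset.prod_ne_zero_iff.mpr (fun j _ => hd_ne j)) ht2

theorem exists_linear_totient_sub_two_totient_q_AONT
    (p r : ℕ) (hp : p.Prime) (hr : 0 < r) (hΦ : 2 ≤ p ^ r - p ^ (r - 1))
    (F : Type*) [Field F] [Fintype F] (hF : Fintype.card F = p ^ r) :
    ∃ M : Matrix (Fin (p ^ r - p ^ (r - 1))) (Fin (p ^ r - p ^ (r - 1))) F,
      M.det ≠ 0 ∧
      ∀ r' c : Fin (p ^ r - p ^ (r - 1) - 2) → Fin (p ^ r - p ^ (r - 1)),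
        Function.Injective r' → Function.Injective c →
        (M.submatrix r' c).det ≠ 0 := by
  classical
  set s := p ^ r - p ^ (r - 1) with hsdef
  obtain ⟨t1, t2, ht1i, ht2i, hNdet⟩ := exists_cauchy_points hp hr hΦ F hF
  set N : Matrix (Fin s) (Fin s) F := Matrix.of fun i j => (t1 i + t2 j)⁻¹ with hNdef
  have hNunit : IsUnit N.det := isUnit_iff_ne_zero.mpr hNdet
  refine ⟨N⁻¹, ?_, ?_⟩
  · rw [Matrix.det_nonsing_inv, Ring.inverse_eq_inv']
    exact inv_ne_zero hNdet
  intro r' c hr' hc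
  intro hdet
  obtain ⟨v, hv0, hveq⟩ := Matrix.exists_mulVec_eq_zero_iff.mpr hdet
  -- extend v to u on Fin s supported on range of c
  set u : Fin s → F := fun k => if h : ∃ j, c j = k then v h.choose else 0 with hudef
  have hu_c : ∀ j, u (c j) = v j := by
    intro j
    have h : ∃ j', c j' = c j := ⟨j, rfl⟩
    show (if h : ∃ j', c j' = c j then v h.choose else 0) = v j
    rw [dif_pos h]
    exact congrArg v (hc h.choose_spec)
  have hu_nc : ∀ k, (∀ j, c j ≠ k) → u k = 0 := by
    intro k hk
    show (if h : ∃ j, c j = k then v h.choose else 0) = 0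
    rw [dif_neg]
    rintro ⟨j, hj⟩
    exact hk j hj
  set w : Fin s → F := N⁻¹ *ᵥ u with hwdef
  have hw_r : ∀ i, w (r' i) = 0 := by
    intro i
    have h0 : (N⁻¹.submatrix r' c *ᵥ v) i = 0 := by simpa using congrFun hveq i
    rw [hwdef]
    show ∑ k, N⁻¹ (r' i) k * u k = 0
    rw [← Finset.sum_subset (Finset.subset_univ (Finset.univ.image c))]
    · rw [Finset.sum_image (fun a _ b _ hab => hc hab)]
      rw [← h0]
      show _ = ∑ j, (N⁻¹).submatrix r' c i j * v j
      apply Finset.sum_congr rfl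
      intro j _
      rw [hu_c j]
      rfl
    · intro k _ hk
      have hknc : ∀ j, c j ≠ k := by
        intro j hj
        exact hk (Finset.mem_image.mpr ⟨j, Finset.mem_univ j, hj⟩)
      rw [hu_nc k hknc, mul_zero]
  have hNw : N *ᵥ w = u := by
    rw [hwdef, Matrix.mulVec_mulVec, Matrix.mul_nonsing_inv N hNunit, Matrix.one_mulVec]
  have hs2 : 2 ≤ s := hΦ
  have hcard_r : (Finset.univ.image r')ᶜ.card = 2 := by
    rw [Finset.card_compl, Finset.card_image_of_injective _ hr']
    simp only [Fintype.card_fin, Finset.card_univ]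
    omega
  obtain ⟨a, b, hab, hABeq⟩ := Finset.card_eq_two.mp hcard_r
  have hw_supp : ∀ k, k ≠ a → k ≠ b → w k = 0 := by
    intro k hka hkb
    have hkmem : k ∉ (Finset.univ.image r')ᶜ := by
      rw [hABeq]
      simp [hka, hkb]
    rw [Finset.notMem_compl] at hkmem
    obtain ⟨i, _, hi⟩ := Finset.mem_image.mp hkmem
    rw [← hi]
    exact hw_r i
  have hcard_c : (Finset.univ.image c)ᶜ.card = 2 := by
    rw [Finset.card_compl, Finset.card_image_of_injective _ hc]
    simp only [Fintype.card_fin, Finset.card_univ]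
    omega
  obtain ⟨c1, c2, hc12, hCeq⟩ := Finset.card_eq_two.mp hcard_c
  have hc1mem : c1 ∈ (Finset.univ.image c)ᶜ := by rw [hCeq]; simp
  have hc2mem : c2 ∈ (Finset.univ.image c)ᶜ := by rw [hCeq]; simp
  have hu_c1 : u c1 = 0 := hu_nc c1 (fun j hj =>
    (Finset.mem_compl.mp hc1mem) (Finset.mem_image.mpr ⟨j, Finset.mem_univ j, hj⟩))
  have hu_c2 : u c2 = 0 := hu_nc c2 (fun j hj =>
    (Finset.mem_compl.mp hc2mem) (Finset.mem_image.mpr ⟨j, Finset.mem_univ j, hj⟩))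
  have hsum2 : ∀ k : Fin s, ∑ x, N k x * w x = N k a * w a + N k b * w b := by
    intro k
    rw [← Finset.sum_subset (Finset.subset_univ ({a, b} : Finset (Fin s)))]
    · rw [Finset.sum_insert (by simp [hab]), Finset.sum_singleton]
    · intro x _ hx
      simp only [Finset.mem_insert, Finset.mem_singleton] at hx
      push_neg at hx
      rw [hw_supp x hx.1 hx.2, mul_zero]
  have hE1 : N c1 a * w a + N c1 b * w b = 0 := by
    rw [← hsum2 c1]
    have h := congrFun hNw c1
    rw [hu_c1] at h
    exact h
  have hE2 : N c2 a * w a + N c2 b * w b = 0 := by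
    rw [← hsum2 c2]
    have h := congrFun hNw c2
    rw [hu_c2] at h
    exact h
  have hminor : N c1 a * N c2 b - N c1 b * N c2 a ≠ 0 :=
    minor2 (fun h => hc12 (ht1i h)) (fun h => hab (ht2i h))
  have hwa : w a = 0 := by
    have h3 : w a * (N c1 a * N c2 b - N c1 b * N c2 a) = 0 := by
      linear_combination (N c2 b) * hE1 - (N c1 b) * hE2
    rcases mul_eq_zero.mp h3 with h | h
    · exact h
    · exact absurd h hminor
  have hwb : w b = 0 := by
    have h3 : w b * (N c1 a * N c2 b - N c1 b * N c2 a) = 0 := by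
      linear_combination (N c1 a) * hE2 - (N c2 a) * hE1
    rcases mul_eq_zero.mp h3 with h | h
    · exact h
    · exact absurd h hminor
  apply hv0
  funext j
  have : u (c j) = 0 := by
    rw [← congrFun hNw (c j)]
    show ∑ x, N (c j) x * w x = 0
    rw [hsum2 (c j), hwa, hwb]
    ring
  rw [← hu_c j, this]
  rfl
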